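/- Let W be a compact metric space, X a metric space with Borel sigma-algebra, (Z_t)_{t∈ℕ} an i.i.d. sequence of X-valued random elements on a probability space (Ω, 𝒜, P), and l : W × X → ℝ such that: l(w, ·) is measurable for each w ∈ W; l(·, x) is continuous for each x ∈ X; there is a measurable d : X → ℝ≥0 with |l(w, x)| ≤ d(x) for all w, x; and E[d(Z_1)] < ∞. Then sup_{w ∈ W} | (1/n) Σ_{i=1}^n l(w, Z_i) − E[l(w, Z_1)] | → 0 almost surely as n → ∞. -/

import Mathlib

open MeasureTheory Filter
open scoped Classical

section Aux

variable {W X : Type*} [MetricSpace W] [CompactSpace W] [Nonempty W]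
  [MetricSpace X] [MeasurableSpace X] [BorelSpace X]

/-- Upper envelope of `g (·) x` over a ball of radius `δ` around `w`, computed via a
countable dense sequence (with `g w x` as default value). -/
noncomputable def uslnUB (g : W → X → ℝ) (w : W) (δ : ℝ) (x : X) : ℝ :=
  ⨆ n : ℕ, max (g w x)
    (if TopologicalSpace.denseSeq W n ∈ Metric.ball w δ
      then g (TopologicalSpace.denseSeq W n) x else g w x)

variable {g : W → X → ℝ} {d : X → ℝ}

lemma uslnUB_term_le (hdom : ∀ w x, |g w x| ≤ d x) (w : W) (δ : ℝ) (x : X) (n : ℕ) :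
    max (g w x) (if TopologicalSpace.denseSeq W n ∈ Metric.ball w δ
      then g (TopologicalSpace.denseSeq W n) x else g w x) ≤ d x := by
  refine max_le ((abs_le.1 (hdom w x)).2) ?_
  split_ifs with h
  · exact (abs_le.1 (hdom _ x)).2
  · exact (abs_le.1 (hdom w x)).2

lemma uslnUB_bddAbove (hdom : ∀ w x, |g w x| ≤ d x) (w : W) (δ : ℝ) (x : X) :
    BddAbove (Set.range fun n : ℕ => max (g w x)
      (if TopologicalSpace.denseSeq W n ∈ Metric.ball w δ
        then g (TopologicalSpace.denseSeq W n) x else g w x)) :=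
  ⟨d x, by rintro y ⟨n, rfl⟩; exact uslnUB_term_le hdom w δ x n⟩

lemma uslnUB_le (hdom : ∀ w x, |g w x| ≤ d x) (w : W) (δ : ℝ) (x : X) :
    uslnUB g w δ x ≤ d x :=
  ciSup_le fun n => uslnUB_term_le hdom w δ x n

lemma self_le_uslnUB (hdom : ∀ w x, |g w x| ≤ d x) (w : W) (δ : ℝ) (x : X) :
    g w x ≤ uslnUB g w δ x :=
  (le_max_left _ _).trans (le_ciSup (uslnUB_bddAbove hdom w δ x) 0)

lemma abs_uslnUB_le (hdom : ∀ w x, |g w x| ≤ d x) (w : W) (δ : ℝ) (x : X) :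
    |uslnUB g w δ x| ≤ d x :=
  abs_le.2 ⟨(abs_le.1 (hdom w x)).1.trans (self_le_uslnUB hdom w δ x), uslnUB_le hdom w δ x⟩

lemma uslnUB_measurable (hm : ∀ w : W, Measurable fun x => g w x) (w : W) (δ : ℝ) :
    Measurable (uslnUB g w δ) := by
  refine Measurable.iSup fun n => ?_
  by_cases h : TopologicalSpace.denseSeq W n ∈ Metric.ball w δ
  · simp only [if_pos h]; exact (hm w).max (hm _)
  · simp only [if_neg h]; exact (hm w).max (hm w)

lemma le_uslnUB (hc : ∀ x : X, Continuous fun w => g w x)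
    (hdom : ∀ w x, |g w x| ≤ d x) {w w' : W} {δ : ℝ}
    (hw' : w' ∈ Metric.ball w δ) (x : X) : g w' x ≤ uslnUB g w δ x := by
  have hdense : Dense (Set.range (TopologicalSpace.denseSeq W)) :=
    TopologicalSpace.denseRange_denseSeq W
  have hsub : Metric.ball w δ ⊆
      closure (Metric.ball w δ ∩ Set.range (TopologicalSpace.denseSeq W)) :=
    hdense.open_subset_closure_inter Metric.isOpen_ball
  have hclosed : IsClosed {u : W | g u x ≤ uslnUB g w δ x} :=
    isClosed_le (hc x) continuous_const
  have hmem : Metric.ball w δ ∩ Set.range (TopologicalSpace.denseSeq W) ⊆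
      {u : W | g u x ≤ uslnUB g w δ x} := by
    rintro u ⟨hu, n, rfl⟩
    calc g (TopologicalSpace.denseSeq W n) x
        ≤ max (g w x) (if TopologicalSpace.denseSeq W n ∈ Metric.ball w δ
          then g (TopologicalSpace.denseSeq W n) x else g w x) := by
          rw [if_pos hu]; exact le_max_right _ _
      _ ≤ uslnUB g w δ x := le_ciSup (uslnUB_bddAbove hdom w δ x) n
  exact (hclosed.closure_subset_iff.2 hmem) (hsub hw')

lemma uslnUB_tendsto (hc : ∀ x : X, Continuous fun w => g w x)
    (hdom : ∀ w x, |g w x| ≤ d x) (w : W) (x : X) :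
    Tendsto (fun k : ℕ => uslnUB g w ((k : ℝ) + 1)⁻¹ x) atTop (nhds (g w x)) := by
  rw [Metric.tendsto_atTop]
  intro ε hε
  have hcont := (hc x).continuousAt (x := w)
  rw [Metric.continuousAt_iff] at hcont
  obtain ⟨δ₀, hδ₀, hδ⟩ := hcont (ε / 2) (by positivity)
  obtain ⟨N, hN⟩ := exists_nat_gt δ₀⁻¹
  refine ⟨N, fun k hk => ?_⟩
  have hkδ : ((k : ℝ) + 1)⁻¹ < δ₀ := by
    rw [inv_lt_comm₀ (by positivity) hδ₀]
    calc δ₀⁻¹ < (N : ℝ) := hN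
      _ ≤ (k : ℝ) := by exact_mod_cast hk
      _ < (k : ℝ) + 1 := lt_add_one _
  have hub : uslnUB g w ((k : ℝ) + 1)⁻¹ x ≤ g w x + ε / 2 := by
    refine ciSup_le fun n => max_le (by linarith) ?_
    split_ifs with h
    · have : dist (TopologicalSpace.denseSeq W n) w < δ₀ :=
        lt_trans (Metric.mem_ball.1 h) hkδ
      have := hδ this
      rw [Real.dist_eq] at this
      linarith [(abs_lt.1 this).2]
    · linarith
  have hlb := self_le_uslnUB hdom w ((k : ℝ) + 1)⁻¹ x
  rw [Real.dist_eq, abs_lt]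
  constructor <;> [linarith; linarith]

end Aux
/-- Uniform strong law of large numbers over a compact parameter space for a
dominated Carathéodory integrand evaluated along an i.i.d. sequence. -/
theorem uniform_strong_law_of_large_numbers
    {W X Ω : Type*} [MetricSpace W] [CompactSpace W] [Nonempty W]
    [MetricSpace X] [MeasurableSpace X] [BorelSpace X]
    [MeasurableSpace Ω] (P : Measure Ω) [IsProbabilityMeasure P]
    (Z : ℕ → Ω → X) (hZm : ∀ t, Measurable (Z t))
    (hindep : ProbabilityTheory.iIndepFun Z P)
    (hident : ∀ t, Measure.map (Z t) P = Measure.map (Z 0) P)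
    (l : W → X → ℝ)
    (hlm : ∀ w : W, Measurable fun x => l w x)
    (hlc : ∀ x : X, Continuous fun w => l w x)
    (d : X → ℝ) (hdm : Measurable d) (hd0 : ∀ x, 0 ≤ d x)
    (hdom : ∀ w x, |l w x| ≤ d x)
    (hdint : Integrable (fun ω => d (Z 0 ω)) P) :
    ∀ᵐ ω ∂P, Tendsto
      (fun n : ℕ => ⨆ w : W,
        |(n : ℝ)⁻¹ * ∑ i ∈ Finset.range n, l w (Z i ω) - ∫ ω', l w (Z 0 ω') ∂P|)
      atTop (nhds 0) := by
  -- the negated integrand, and the lower envelope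
  set g : W → X → ℝ := fun w x => -(l w x) with hg
  have hgm : ∀ w : W, Measurable fun x => g w x := fun w => (hlm w).neg
  have hgc : ∀ x : X, Continuous fun w => g w x := fun x => (hlc x).neg
  have hgdom : ∀ w x, |g w x| ≤ d x := fun w x => by simpa [hg, abs_neg] using hdom w x
  set lb : W → ℝ → X → ℝ := fun w δ x => -(uslnUB g w δ x) with hlb
  have hlb_meas : ∀ (w : W) (δ : ℝ), Measurable (lb w δ) :=
    fun w δ => (uslnUB_measurable hgm w δ).neg
  have hlb_abs : ∀ (w : W) (δ : ℝ) (x : X), |lb w δ x| ≤ d x :=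
    fun w δ x => by simpa [hlb, abs_neg] using abs_uslnUB_le hgdom w δ x
  have hlb_le : ∀ {w w' : W} {δ : ℝ}, w' ∈ Metric.ball w δ → ∀ x : X, lb w δ x ≤ l w' x := by
    intro w w' δ hw' x
    have := le_uslnUB hgc hgdom hw' x
    simp only [hg] at this
    simp only [hlb]
    linarith
  have hlb_tendsto : ∀ (w : W) (x : X),
      Tendsto (fun k : ℕ => lb w ((k : ℝ) + 1)⁻¹ x) atTop (nhds (l w x)) := by
    intro w x
    have := (uslnUB_tendsto hgc hgdom w x).neg
    simpa [hlb, hg] using this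
  have hub_tendsto : ∀ (w : W) (x : X),
      Tendsto (fun k : ℕ => uslnUB l w ((k : ℝ) + 1)⁻¹ x) atTop (nhds (l w x)) :=
    fun w x => uslnUB_tendsto hlc hdom w x
  -- integrability of dominated compositions
  have key_int : ∀ f : X → ℝ, Measurable f → (∀ x, |f x| ≤ d x) →
      Integrable (fun ω => f (Z 0 ω)) P := by
    intro f hf hb
    refine hdint.mono (hf.comp (hZm 0)).aestronglyMeasurable (ae_of_all _ fun ω => ?_)
    simp only [Real.norm_eq_abs]
    exact (hb (Z 0 ω)).trans (le_abs_self _)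
  -- strong law for dominated compositions
  have slln : ∀ f : X → ℝ, Measurable f → (∀ x, |f x| ≤ d x) →
      ∀ᵐ ω ∂P, Tendsto (fun n : ℕ => (∑ i ∈ Finset.range n, f (Z i ω)) / n)
        atTop (nhds (∫ ω', f (Z 0 ω') ∂P)) := by
    intro f hf hb
    exact ProbabilityTheory.strong_law_ae_real (fun i ω => f (Z i ω)) (key_int f hf hb)
      (fun i j hij => (hindep.indepFun hij).comp hf hf)
      (fun i => (ProbabilityTheory.IdentDistrib.comp
        ⟨(hZm i).aemeasurable, (hZm 0).aemeasurable, hident i⟩ hf))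
  -- the main estimate for a fixed ε
  have main : ∀ ε : ℝ, 0 < ε → ∀ᵐ ω ∂P, ∀ᶠ n : ℕ in atTop,
      (⨆ w : W, |(n : ℝ)⁻¹ * ∑ i ∈ Finset.range n, l w (Z i ω)
        - ∫ ω', l w (Z 0 ω') ∂P|) ≤ 3 * ε := by
    intro ε hε
    -- choice of radii
    have hδ : ∀ w : W, ∃ δ : ℝ, 0 < δ ∧
        (∫ ω', uslnUB l w δ (Z 0 ω') ∂P ≤ (∫ ω', l w (Z 0 ω') ∂P) + ε) ∧
        ((∫ ω', l w (Z 0 ω') ∂P) - ε ≤ ∫ ω', lb w δ (Z 0 ω') ∂P) := by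
      intro w
      have hU : Tendsto (fun k : ℕ => ∫ ω', uslnUB l w ((k : ℝ) + 1)⁻¹ (Z 0 ω') ∂P)
          atTop (nhds (∫ ω', l w (Z 0 ω') ∂P)) := by
        refine tendsto_integral_of_dominated_convergence (fun ω => d (Z 0 ω))
          (fun k => ((uslnUB_measurable hlm w _).comp (hZm 0)).aestronglyMeasurable)
          hdint (fun k => ae_of_all _ fun ω => ?_) (ae_of_all _ fun ω => hub_tendsto w (Z 0 ω))
        simpa [Real.norm_eq_abs] using abs_uslnUB_le hdom w ((k : ℝ) + 1)⁻¹ (Z 0 ω)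
      have hL : Tendsto (fun k : ℕ => ∫ ω', lb w ((k : ℝ) + 1)⁻¹ (Z 0 ω') ∂P)
          atTop (nhds (∫ ω', l w (Z 0 ω') ∂P)) := by
        refine tendsto_integral_of_dominated_convergence (fun ω => d (Z 0 ω))
          (fun k => ((hlb_meas w _).comp (hZm 0)).aestronglyMeasurable)
          hdint (fun k => ae_of_all _ fun ω => ?_) (ae_of_all _ fun ω => hlb_tendsto w (Z 0 ω))
        simpa [Real.norm_eq_abs] using hlb_abs w ((k : ℝ) + 1)⁻¹ (Z 0 ω)
      have h1 := hU.eventually_le_const (lt_add_of_pos_right _ hε)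
      have h2 := hL.eventually_const_le (sub_lt_self _ hε)
      obtain ⟨k, hk1, hk2⟩ := (h1.and h2).exists
      exact ⟨((k : ℝ) + 1)⁻¹, by positivity, hk1, hk2⟩
    choose δf hδpos hδU hδL using hδ
    -- finite subcover
    obtain ⟨t, ht⟩ := isCompact_univ.elim_finite_subcover
      (fun w : W => Metric.ball w (δf w)) (fun w => Metric.isOpen_ball)
      (fun w' _ => Set.mem_iUnion.2 ⟨w', Metric.mem_ball_self (hδpos w')⟩)
    -- a.e. strong laws for the finitely many envelopes
    have hae : ∀ᵐ ω ∂P, ∀ w ∈ (t : Set W),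
        (Tendsto (fun n : ℕ => (∑ i ∈ Finset.range n, uslnUB l w (δf w) (Z i ω)) / n)
          atTop (nhds (∫ ω', uslnUB l w (δf w) (Z 0 ω') ∂P)) ∧
        Tendsto (fun n : ℕ => (∑ i ∈ Finset.range n, lb w (δf w) (Z i ω)) / n)
          atTop (nhds (∫ ω', lb w (δf w) (Z 0 ω') ∂P))) := by
      rw [ae_ball_iff t.countable_toSet]
      intro w _
      exact (slln _ (uslnUB_measurable hlm w _) (abs_uslnUB_le hdom w _)).and
        (slln _ (hlb_meas w _) (hlb_abs w _))
    filter_upwards [hae] with ω hω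
    have hev : ∀ᶠ n : ℕ in atTop, ∀ w ∈ t,
        ((∑ i ∈ Finset.range n, uslnUB l w (δf w) (Z i ω)) / n
          ≤ (∫ ω', l w (Z 0 ω') ∂P) + 2 * ε) ∧
        ((∫ ω', l w (Z 0 ω') ∂P) - 2 * ε
          ≤ (∑ i ∈ Finset.range n, lb w (δf w) (Z i ω)) / n) := by
      rw [eventually_all_finset]
      intro w hw
      obtain ⟨hU, hL⟩ := hω w (Finset.mem_coe.2 hw)
      have h1 := hU.eventually_le_const (show ∫ ω', uslnUB l w (δf w) (Z 0 ω') ∂P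
        < (∫ ω', l w (Z 0 ω') ∂P) + 2 * ε from (hδU w).trans_lt (by linarith))
      have h2 := hL.eventually_const_le (show (∫ ω', l w (Z 0 ω') ∂P) - 2 * ε
        < ∫ ω', lb w (δf w) (Z 0 ω') ∂P from lt_of_lt_of_le (by linarith) (hδL w))
      exact h1.and h2
    filter_upwards [hev] with n hn
    refine ciSup_le fun w' => ?_
    obtain ⟨w, hwt, hw'⟩ := Set.mem_iUnion₂.1 (ht (Set.mem_univ w'))
    obtain ⟨hnU, hnL⟩ := hn w hwt
    have hint_l : ∀ w'' : W, Integrable (fun ω' => l w'' (Z 0 ω')) P :=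
      fun w'' => key_int _ (hlm w'') (fun x => hdom w'' x)
    -- integral comparisons
    have hIU : (∫ ω', l w' (Z 0 ω') ∂P) ≤ ∫ ω', uslnUB l w (δf w) (Z 0 ω') ∂P :=
      integral_mono (hint_l w') (key_int _ (uslnUB_measurable hlm w _) (abs_uslnUB_le hdom w _))
        (fun ω' => le_uslnUB hlc hdom hw' (Z 0 ω'))
    have hIL : (∫ ω', lb w (δf w) (Z 0 ω') ∂P) ≤ ∫ ω', l w' (Z 0 ω') ∂P :=
      integral_mono (key_int _ (hlb_meas w _) (hlb_abs w _)) (hint_l w')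
        (fun ω' => hlb_le hw' (Z 0 ω'))
    have hIU' : (∫ ω', uslnUB l w (δf w) (Z 0 ω') ∂P) ≤ (∫ ω', l w (Z 0 ω') ∂P) + ε := hδU w
    have hIL' : (∫ ω', l w (Z 0 ω') ∂P) - ε ≤ ∫ ω', lb w (δf w) (Z 0 ω') ∂P := hδL w
    -- mean comparisons
    have hn0 : (0 : ℝ) ≤ ((n : ℝ))⁻¹ := by positivity
    have hmU : (n : ℝ)⁻¹ * ∑ i ∈ Finset.range n, l w' (Z i ω)
        ≤ (∑ i ∈ Finset.range n, uslnUB l w (δf w) (Z i ω)) / n := by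
      rw [div_eq_inv_mul]
      exact mul_le_mul_of_nonneg_left
        (Finset.sum_le_sum fun i _ => le_uslnUB hlc hdom hw' (Z i ω)) hn0
    have hmL : (∑ i ∈ Finset.range n, lb w (δf w) (Z i ω)) / n
        ≤ (n : ℝ)⁻¹ * ∑ i ∈ Finset.range n, l w' (Z i ω) := by
      rw [div_eq_inv_mul]
      exact mul_le_mul_of_nonneg_left
        (Finset.sum_le_sum fun i _ => hlb_le hw' (Z i ω)) hn0
    rw [abs_sub_le_iff]
    constructor <;> [skip; skip]
    · linarith
    · linarith
  -- combine over ε = (m+1)⁻¹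
  have hall : ∀ᵐ ω ∂P, ∀ m : ℕ, ∀ᶠ n : ℕ in atTop,
      (⨆ w : W, |(n : ℝ)⁻¹ * ∑ i ∈ Finset.range n, l w (Z i ω)
        - ∫ ω', l w (Z 0 ω') ∂P|) ≤ 3 * ((m : ℝ) + 1)⁻¹ :=
    ae_all_iff.2 fun m => main ((m : ℝ) + 1)⁻¹ (by positivity)
  filter_upwards [hall] with ω hω
  rw [Metric.tendsto_atTop]
  intro ε hε
  obtain ⟨m, hm⟩ := exists_nat_gt (3 / ε)
  have hm1 : (0 : ℝ) < (m : ℝ) + 1 := by positivity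
  have hmε : 3 * ((m : ℝ) + 1)⁻¹ < ε := by
    rw [← div_eq_mul_inv, div_lt_iff₀ hm1]
    rw [div_lt_iff₀ hε] at hm
    nlinarith
  obtain ⟨N, hN⟩ := eventually_atTop.1 (hω m)
  refine ⟨N, fun n hn => ?_⟩
  have h0 : (0 : ℝ) ≤ ⨆ w : W, |(n : ℝ)⁻¹ * ∑ i ∈ Finset.range n, l w (Z i ω)
      - ∫ ω', l w (Z 0 ω') ∂P| :=
    Real.iSup_nonneg fun w => abs_nonneg _
  rw [Real.dist_eq, sub_zero, abs_of_nonneg h0]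
  exact (hN n hn).trans_lt hmε
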